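/- Let A and C be finite abelian groups of odd order and ψ : C × C → A an equalized 2-cocycle. Let Ω be a coadjoint orbit and χ ∈ Ω. For every b ∈ B_ψ, the subspace V_Ω is invariant under the right regular action R(b) : x ↦ x·b⁻¹ of ℂ[B_ψ], and the trace of the ℂ-linear endomorphism R(b) restricted to V_Ω equals (#Ω)·χ(b) if b ∈ Stab(χ), and equals 0 if b ∉ Stab(χ). -/

import Mathlib

/-- A 2-cocycle on `C` with values in `A` (trivial action of `C` on `A`). -/
def IsCocycle {A C : Type*} [AddCommGroup A] [AddCommGroup C] (ψ : C → C → A) : Prop :=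
  ∀ c₁ c₂ c₃ : C, ψ c₁ c₂ + ψ (c₁ + c₂) c₃ = ψ c₁ (c₂ + c₃) + ψ c₂ c₃

/-- A 2-cocycle `ψ` is equalized iff `ψ(c, -c) = 0` for all `c`. -/
def Equalized {A C : Type*} [AddCommGroup A] [AddCommGroup C] (ψ : C → C → A) : Prop :=
  ∀ c : C, ψ c (-c) = 0

/-- The skew-symmetrization `η(c₁,c₂) = ψ(c₁,c₂) - ψ(c₂,c₁)` of a 2-cocycle. -/
def eta {A C : Type*} [AddCommGroup A] [AddCommGroup C] (ψ : C → C → A)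
    (c₁ c₂ : C) : A :=
  ψ c₁ c₂ - ψ c₂ c₁

/-- The addition `⊞` on `A × C` given by `φ(c₁,c₂) = (ψ(c₁,c₂)+ψ(c₂,c₁))/2`,
where `half` is the halving map of the 2-divisible group `A`. -/
def boxAdd {A C : Type*} [AddCommGroup A] [AddCommGroup C] (half : A → A)
    (ψ : C → C → A) (x y : A × C) : A × C :=
  (x.1 + y.1 + half (ψ x.2 y.2 + ψ y.2 x.2), x.2 + y.2)

/-- A character of `(A × C, ⊞)`: a map `χ : A × C → ℂˣ` with `χ(x ⊞ y) = χ(x)·χ(y)`. -/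
def IsChar {A C : Type*} [AddCommGroup A] [AddCommGroup C] (half : A → A)
    (ψ : C → C → A) (χ : A × C → ℂˣ) : Prop :=
  ∀ x y : A × C, χ (boxAdd half ψ x y) = χ x * χ y

/-- The coadjoint action of `b ∈ B_ψ` on characters: `(b • χ)(a,c) = χ(a - η(c_b,c), c)`. -/
def coact {A C : Type*} [AddCommGroup A] [AddCommGroup C] (ψ : C → C → A)
    (b : A × C) (χ : A × C → ℂˣ) : A × C → ℂˣ :=
  fun x => χ (x.1 - eta ψ b.2 x.2, x.2)

/-- A coadjoint orbit: the orbit of some character `χ₀` under the coadjoint action. -/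
def IsCoadjointOrbit {A C : Type*} [AddCommGroup A] [AddCommGroup C] (half : A → A)
    (ψ : C → C → A) (Ω : Set (A × C → ℂˣ)) : Prop :=
  ∃ χ₀ : A × C → ℂˣ, IsChar half ψ χ₀ ∧
    Ω = {χ : A × C → ℂˣ | ∃ b : A × C, χ = coact ψ b χ₀}

/-- The element `X_χ = ∑_{x ∈ A × C} χ(x)·x` of the group algebra `ℂ[B_ψ]`,
where `B_ψ` is `A × C` endowed with a group structure. -/
noncomputable def Xelem {A C : Type*} [AddCommGroup A] [AddCommGroup C]
    [Fintype A] [Fintype C] [Group (A × C)] (χ : A × C → ℂˣ) :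
    MonoidAlgebra ℂ (A × C) :=
  ∑ x : A × C, MonoidAlgebra.single x (χ x : ℂ)

/-- The subspace `V_Ω = span_ℂ {X_χ : χ ∈ Ω}` of `ℂ[B_ψ]`. -/
noncomputable def Vorb {A C : Type*} [AddCommGroup A] [AddCommGroup C]
    [Fintype A] [Fintype C] [Group (A × C)] (Ω : Set (A × C → ℂˣ)) :
    Submodule ℂ (MonoidAlgebra ℂ (A × C)) :=
  Submodule.span ℂ (Xelem '' Ω)


section Aux
variable {A C : Type*} [AddCommGroup A] [AddCommGroup C] {ψ : C → C → A} {half : A → A}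

lemma psi_zero_zero (heq : Equalized ψ) : ψ 0 0 = 0 := by simpa using heq 0

lemma psi_right_zero (hψ : IsCocycle ψ) (heq : Equalized ψ) (c : C) : ψ c 0 = 0 := by
  have h := hψ c 0 0
  simp only [add_zero, zero_add] at h
  have h2 : ψ c 0 = ψ 0 0 := add_left_cancel h
  rw [h2, psi_zero_zero heq]

lemma psi_left_zero (hψ : IsCocycle ψ) (heq : Equalized ψ) (c : C) : ψ 0 c = 0 := by
  have h := hψ 0 0 c
  simp only [add_zero, zero_add] at h
  have h2 : ψ 0 0 = ψ 0 c := add_right_cancel h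
  rw [← h2, psi_zero_zero heq]

/-- `ψ(c+d, -d) = -ψ(c,d)` for an equalized cocycle. -/
lemma psi_addneg (hψ : IsCocycle ψ) (heq : Equalized ψ) (c d : C) :
    ψ (c + d) (-d) = -(ψ c d) := by
  have h := hψ c d (-d)
  rw [add_neg_cancel, psi_right_zero hψ heq, heq d, add_zero] at h
  exact eq_neg_of_add_eq_zero_right h

/-- `ψ(d,c) + ψ(-d, c+d) = 0`. -/
lemma psi_negadd (hψ : IsCocycle ψ) (heq : Equalized ψ) (c d : C) :
    ψ d c + ψ (-d) (c + d) = 0 := by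
  have h := hψ (-d) d c
  rw [neg_add_cancel, psi_left_zero hψ heq] at h
  have hd : ψ (-d) d = 0 := by have := heq (-d); rwa [neg_neg] at this
  rw [hd, zero_add, add_comm d c] at h
  rw [add_comm]
  exact h.symm

section HalfOdd
variable [Fintype A]

lemma two_inj (hA : Odd (Fintype.card A)) {a b : A} (h : a + a = b + b) : a = b := by
  obtain ⟨m, hm⟩ := hA
  have key : ∀ x : A, (m + 1) • (x + x) = x := by
    intro x
    have hc : (Fintype.card A) • x = 0 := card_nsmul_eq_zero
    rw [smul_add, ← add_nsmul]
    have : (m + 1) + (m + 1) = Fintype.card A + 1 := by omega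
    rw [this, add_nsmul, hc, zero_add, one_nsmul]
  rw [← key a, ← key b, h]

variable (hA : Odd (Fintype.card A)) (hhalf : ∀ a : A, half a + half a = a)
include hA hhalf

lemma half_double (a : A) : half (a + a) = a :=
  two_inj hA (by rw [hhalf])

lemma half_zero : half 0 = 0 := by
  have := half_double hA hhalf (0 : A); simpa using this

lemma half_add (u v : A) : half (u + v) = half u + half v := by
  apply two_inj hA
  rw [hhalf, add_add_add_comm, hhalf, hhalf]

end HalfOdd

lemma eta_add_left (hψ : IsCocycle ψ) (c d e : C) :
    eta ψ (c + d) e = eta ψ c e + eta ψ d e := by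
  have h1 := hψ c d e
  have h2 := hψ e c d
  have h3 := hψ c e d
  rw [add_comm e c] at h2
  rw [add_comm e d] at h3
  simp only [eta]
  linear_combination (norm := abel) h1 + h2 - h3

lemma eta_neg' (c d : C) : eta ψ c d = -(eta ψ d c) := by simp [eta]

lemma eta_zero_left (hψ : IsCocycle ψ) (heq : Equalized ψ) (c : C) : eta ψ 0 c = 0 := by
  simp [eta, psi_left_zero hψ heq, psi_right_zero hψ heq]

lemma eta_add_right (hψ : IsCocycle ψ) (c d e : C) :
    eta ψ c (d + e) = eta ψ c d + eta ψ c e := by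
  rw [eta_neg', eta_add_left hψ, eta_neg' d c, eta_neg' e c]; abel



section Char
variable [Fintype A] (hψ : IsCocycle ψ) (heq : Equalized ψ)
  (hA : Odd (Fintype.card A)) (hhalf : ∀ a : A, half a + half a = a)
  {χ : A × C → ℂˣ} (hch : IsChar half ψ χ)
include hψ heq hA hhalf hch

lemma char_shift (a t : A) (c : C) : χ (a + t, c) = χ (a, c) * χ (t, 0) := by
  have h := hch (a, c) (t, 0)
  simp only [boxAdd, psi_right_zero hψ heq, psi_left_zero hψ heq, add_zero,
    half_zero hA hhalf] at h
  exact h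

lemma char_zero : χ (0, 0) = 1 := by
  have h := char_shift hψ heq hA hhalf hch 0 0 0
  rw [add_zero] at h
  exact (left_eq_mul.mp h)

lemma char_neg0 (s : A) : χ (-s, 0) = (χ (s, 0))⁻¹ := by
  have h := char_shift hψ heq hA hhalf hch (-s) s 0
  rw [neg_add_cancel, char_zero hψ heq hA hhalf hch] at h
  exact eq_inv_of_mul_eq_one_left h.symm

lemma char_nsmul (n : ℕ) (s : A) : χ (n • s, 0) = χ (s, 0) ^ n := by
  induction n with
  | zero => simpa using char_zero hψ heq hA hhalf hch
  | succ n ih =>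
      rw [succ_nsmul, char_shift hψ heq hA hhalf hch, ih, pow_succ]

lemma char_sq_one {s : A} (h2 : χ (s, 0) * χ (s, 0) = 1) : χ (s, 0) = 1 := by
  obtain ⟨m, hm⟩ := hA
  have hp : χ (s, 0) ^ Fintype.card A = 1 := by
    rw [← char_nsmul hψ heq ⟨m, hm⟩ hhalf hch, card_nsmul_eq_zero,
      char_zero hψ heq ⟨m, hm⟩ hhalf hch]
  have h2' : χ (s, 0) ^ 2 = 1 := by rw [sq]; exact h2
  calc χ (s, 0) = χ (s, 0) ^ (2 * m + 1) := by
        rw [pow_succ, pow_mul, h2', one_pow, one_mul]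
    _ = 1 := by rw [← hm]; exact hp

end Char

lemma coact_snd (b : A × C) (χ : A × C → ℂˣ) :
    coact ψ b χ = coact ψ ((0 : A), b.2) χ := rfl

lemma coact_coact (hψ : IsCocycle ψ) (b₁ b₂ : A × C) (χ : A × C → ℂˣ) :
    coact ψ b₁ (coact ψ b₂ χ) = coact ψ ((0 : A), b₁.2 + b₂.2) χ := by
  funext x
  simp only [coact]
  congr 2
  rw [eta_add_left hψ]
  abel

lemma coact_isChar [Fintype A] (hψ : IsCocycle ψ) (heq : Equalized ψ)
    (hA : Odd (Fintype.card A)) (hhalf : ∀ a : A, half a + half a = a)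
    {χ : A × C → ℂˣ} (hch : IsChar half ψ χ) (b : A × C) :
    IsChar half ψ (coact ψ b χ) := by
  intro x y
  simp only [coact, boxAdd]
  rw [← hch (x.1 - eta ψ b.2 x.2, x.2) (y.1 - eta ψ b.2 y.2, y.2)]
  simp only [boxAdd]
  congr 2
  rw [eta_add_right hψ]
  abel

end Aux

section Aux2
variable {A C : Type*} [AddCommGroup A] [AddCommGroup C] {ψ : C → C → A} {half : A → A}

/-- `z ↦ z ⊞ y` is injective. -/
lemma boxAdd_inj (y : A × C) :
    Function.Injective (fun z : A × C => boxAdd half ψ z y) := by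
  intro z z' h
  simp only [boxAdd, Prod.mk.injEq] at h
  obtain ⟨h1, h2⟩ := h
  have h2' : z.2 = z'.2 := add_right_cancel h2
  rw [h2'] at h1
  have h1' : z.1 = z'.1 := add_right_cancel (add_right_cancel h1)
  exact Prod.ext h1' h2'

variable [Fintype A] [Fintype C]

lemma stab_one (hψ : IsCocycle ψ) (heq : Equalized ψ)
    (hA : Odd (Fintype.card A)) (hhalf : ∀ a : A, half a + half a = a)
    {χ : A × C → ℂˣ} (hch : IsChar half ψ χ) {b : A × C}
    (hfix : coact ψ b χ = χ) (c : C) : χ (-(eta ψ b.2 c), 0) = 1 := by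
  have h := congrFun hfix ((0 : A), c)
  simp only [coact] at h
  rw [sub_eq_add_neg, char_shift hψ heq hA hhalf hch] at h
  exact mul_eq_left.mp h

lemma stab_half_c (hψ : IsCocycle ψ) (heq : Equalized ψ)
    (hA : Odd (Fintype.card A)) (hhalf : ∀ a : A, half a + half a = a)
    {χ : A × C → ℂˣ} (hch : IsChar half ψ χ) {b : A × C} {c' : C}
    (hc' : c' + c' = b.2) (hfix : coact ψ b χ = χ) :
    coact ψ ((0 : A), c') χ = χ := by
  funext x
  simp only [coact]
  have hs : χ (-(eta ψ c' x.2), 0) = 1 := by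
    apply char_sq_one hψ heq hA hhalf hch
    rw [← char_shift hψ heq hA hhalf hch]
    have he : -(eta ψ c' x.2) + -(eta ψ c' x.2) = -(eta ψ b.2 x.2) := by
      rw [← hc', eta_add_left hψ]; abel
    rw [he]
    exact stab_one hψ heq hA hhalf hch hfix x.2
  rw [sub_eq_add_neg, char_shift hψ heq hA hhalf hch, hs, mul_one]

lemma stab_value (hψ : IsCocycle ψ) (heq : Equalized ψ)
    (hA : Odd (Fintype.card A)) (hhalf : ∀ a : A, half a + half a = a)
    {χ : A × C → ℂˣ} (hch : IsChar half ψ χ) {b : A × C}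
    (hfix : coact ψ b χ = χ) (d : C) : coact ψ ((0 : A), d) χ b = χ b := by
  simp only [coact]
  have h1 := stab_one hψ heq hA hhalf hch hfix d
  rw [char_neg0 hψ heq hA hhalf hch, inv_eq_one] at h1
  have he : b.1 - eta ψ d b.2 = b.1 + eta ψ b.2 d := by
    rw [eta_neg' d b.2]; abel
  rw [he, char_shift hψ heq hA hhalf hch, h1, mul_one]

lemma orbit_rel (hψ : IsCocycle ψ) {χ₀ χ' χ'' : A × C → ℂˣ} {b₁ b₂ : A × C}
    (h1 : χ' = coact ψ b₁ χ₀) (h2 : χ'' = coact ψ b₂ χ₀) :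
    χ'' = coact ψ ((0 : A), b₂.2 - b₁.2) χ' := by
  rw [h1, coact_coact hψ]
  simp only [sub_add_cancel]
  rw [h2, coact_snd]

/-- Orthogonality of distinct characters. -/
lemma char_orth (hψ : IsCocycle ψ) (heq : Equalized ψ)
    (hA : Odd (Fintype.card A)) (hhalf : ∀ a : A, half a + half a = a)
    {χ χ' : A × C → ℂˣ} (hch : IsChar half ψ χ) (hch' : IsChar half ψ χ')
    (hne : χ ≠ χ') :
    ∑ x : A × C, ((χ x : ℂ) * ((χ' x : ℂ))⁻¹) = 0 := by
  obtain ⟨y, hy⟩ : ∃ y, χ y ≠ χ' y := by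
    by_contra hcon
    push_neg at hcon
    exact hne (funext hcon)
  set S : ℂ := ∑ x : A × C, ((χ x : ℂ) * ((χ' x : ℂ))⁻¹) with hS
  have hb : Function.Bijective (fun z : A × C => boxAdd half ψ z y) :=
    Finite.injective_iff_bijective.mp (boxAdd_inj y)
  have hre : S = ((χ y : ℂ) * ((χ' y : ℂ))⁻¹) * S := by
    calc S = ∑ z : A × C, ((χ (boxAdd half ψ z y) : ℂ) * ((χ' (boxAdd half ψ z y) : ℂ))⁻¹) :=
          (Function.Bijective.sum_comp hb _).symm
      _ = ∑ z : A × C, ((χ y : ℂ) * ((χ' y : ℂ))⁻¹) * ((χ z : ℂ) * ((χ' z : ℂ))⁻¹) := by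
          apply Finset.sum_congr rfl
          intro z _
          rw [hch z y, hch' z y]
          push_cast
          field_simp
      _ = ((χ y : ℂ) * ((χ' y : ℂ))⁻¹) * S := by rw [hS, Finset.mul_sum]
  have hq : ((χ y : ℂ) * ((χ' y : ℂ))⁻¹) ≠ 1 := by
    intro hcon
    apply hy
    ext
    field_simp at hcon
    exact hcon
  have : (((χ y : ℂ) * ((χ' y : ℂ))⁻¹) - 1) * S = 0 := by
    rw [sub_mul, one_mul, ← hre, sub_self]
  rcases mul_eq_zero.mp this with h | h
  · exact absurd (by linear_combination h) hq
  · exact h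

lemma char_self_sum {χ : A × C → ℂˣ} :
    ∑ x : A × C, ((χ x : ℂ) * ((χ x : ℂ))⁻¹) = (Fintype.card (A × C) : ℂ) := by
  rw [Finset.sum_congr rfl (fun x _ => mul_inv_cancel₀ (Units.ne_zero (χ x)))]
  rw [Finset.sum_const, Finset.card_univ, nsmul_eq_mul, mul_one]

end Aux2

section Aux3
variable {A C : Type*} [AddCommGroup A] [AddCommGroup C] {ψ : C → C → A} {half : A → A}
variable [Fintype A] [Fintype C] [Group (A × C)]

lemma Xelem_apply (χ : A × C → ℂˣ) (x : A × C) : (Xelem χ).coeff x = χ x := by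
  classical
  rw [Xelem]
  rw [MonoidAlgebra.coeff_sum, Finsupp.finset_sum_apply]
  rw [Finset.sum_eq_single x]
  · simp [MonoidAlgebra.coeff_single]
  · intro y _ hy
    simp [MonoidAlgebra.coeff_single, Finsupp.single_apply, hy]
  · intro hx
    exact absurd (Finset.mem_univ x) hx

lemma xelem_linIndep (hψ : IsCocycle ψ) (heq : Equalized ψ)
    (hA : Odd (Fintype.card A)) (hhalf : ∀ a : A, half a + half a = a)
    {ι : Type*} [Fintype ι] (χs : ι → (A × C → ℂˣ))
    (hchs : ∀ i, IsChar half ψ (χs i)) (hinj : Function.Injective χs) :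
    LinearIndependent ℂ (fun i => Xelem (χs i)) := by
  classical
  rw [Fintype.linearIndependent_iff]
  intro g hg j
  have hpt : ∀ x : A × C, ∑ i, g i * ((χs i x : ℂ)) = 0 := by
    intro x
    have h0 : (∑ i, g i • Xelem (χs i)).coeff x = (0 : MonoidAlgebra ℂ (A × C)).coeff x := by rw [hg]
    rw [MonoidAlgebra.coeff_sum, Finsupp.finset_sum_apply] at h0
    have hsm : ∀ i, (g i • Xelem (χs i)).coeff x = g i * (χs i x : ℂ) := by
      intro i
      show g i * (Xelem (χs i)).coeff x = _
      rw [Xelem_apply]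
    simpa [hsm, Xelem_apply] using h0
  have hT : ∑ x : A × C, ∑ i, ((χs j x : ℂ))⁻¹ * (g i * ((χs i x : ℂ))) = 0 := by
    apply Finset.sum_eq_zero
    intro x _
    rw [← Finset.mul_sum, hpt x, mul_zero]
  rw [Finset.sum_comm] at hT
  have hT2 : ∑ i, g i * (∑ x : A × C, ((χs i x : ℂ) * ((χs j x : ℂ))⁻¹)) = 0 := by
    rw [← hT]
    apply Finset.sum_congr rfl
    intro i _
    rw [Finset.mul_sum]
    apply Finset.sum_congr rfl
    intro x _
    ring
  have hdiag : ∀ i, (∑ x : A × C, ((χs i x : ℂ) * ((χs j x : ℂ))⁻¹)) =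
      if i = j then (Fintype.card (A × C) : ℂ) else 0 := by
    intro i
    by_cases h : i = j
    · subst h; simp [char_self_sum]
    · rw [if_neg h]
      exact char_orth hψ heq hA hhalf (hchs i) (hchs j) (fun hc => h (hinj hc))
  rw [Finset.sum_congr rfl (fun i _ => by rw [hdiag i])] at hT2
  simp only [mul_ite, mul_zero, Finset.sum_ite_eq', Finset.mem_univ, if_true] at hT2
  have hcard : (Fintype.card (A × C) : ℂ) ≠ 0 := by
    exact_mod_cast Fintype.card_ne_zero
  exact (mul_eq_zero.mp hT2).resolve_right hcard

lemma xelem_mul (hψ : IsCocycle ψ) (heq : Equalized ψ)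
    (hA : Odd (Fintype.card A)) (hhalf : ∀ a : A, half a + half a = a)
    (hmul : ∀ x y : A × C, x * y = (x.1 + y.1 + ψ x.2 y.2, x.2 + y.2))
    {χ : A × C → ℂˣ} (hch : IsChar half ψ χ) (b : A × C) {c' : C}
    (hc' : c' + c' = b.2) :
    Xelem χ * MonoidAlgebra.single b⁻¹ (1 : ℂ) =
      (χ b : ℂ) • Xelem (coact ψ ((0 : A), c') χ) := by
  have key : ∀ y : A × C, χ (y * b) = χ b * (coact ψ ((0 : A), c') χ) y := by
    intro y
    rw [hmul y b]
    simp only [coact]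
    rw [mul_comm, ← hch (y.1 - eta ψ c' y.2, y.2) b]
    simp only [boxAdd]
    congr 2
    apply two_inj hA
    have hH := hhalf (ψ y.2 b.2 + ψ b.2 y.2)
    have hE : eta ψ c' y.2 + eta ψ c' y.2 = ψ b.2 y.2 - ψ y.2 b.2 := by
      rw [← eta_add_left hψ, hc']; rfl
    linear_combination (norm := abel) hE - hH
  rw [Xelem, Finset.sum_mul]
  simp only [MonoidAlgebra.single_mul_single, mul_one]
  rw [Xelem, Finset.smul_sum]
  simp only [MonoidAlgebra.smul_single']
  apply Fintype.sum_bijective (fun x : A × C => x * b⁻¹)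
    (Group.mulRight_bijective b⁻¹)
  intro x
  congr 1
  have : (x * b⁻¹) * b = x := inv_mul_cancel_right x b
  calc (χ x : ℂ) = (χ ((x * b⁻¹) * b) : ℂ) := by rw [this]
    _ = (χ b : ℂ) * ((coact ψ ((0 : A), c') χ) (x * b⁻¹) : ℂ) := by
        rw [key (x * b⁻¹)]; push_cast; ring

end Aux3

/-- **Character formula.** Let `A` and `C` be finite abelian groups of odd
order and `ψ` an equalized 2-cocycle, with `B_ψ` the group `A × C` with multiplication
`(a₁,c₁)·(a₂,c₂) = (a₁+a₂+ψ(c₁,c₂), c₁+c₂)`. Let `Ω` be a coadjoint orbit and `χ ∈ Ω`.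
For every `b ∈ B_ψ`, the subspace `V_Ω` is invariant under the right regular action
`R(b) : x ↦ x·b⁻¹` on `ℂ[B_ψ]`, and the trace of `R(b)` restricted to `V_Ω` equals
`#Ω · χ(b)` if `b ∈ Stab(χ)` and `0` otherwise. -/
theorem character_formula {A C : Type*} [AddCommGroup A] [AddCommGroup C]
    [Fintype A] [Fintype C] [Group (A × C)]
    (hA : Odd (Fintype.card A)) (hC : Odd (Fintype.card C))
    (half : A → A) (hhalf : ∀ a : A, half a + half a = a)
    (ψ : C → C → A) (hψ : IsCocycle ψ) (heq : Equalized ψ)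
    (hmul : ∀ x y : A × C, x * y = (x.1 + y.1 + ψ x.2 y.2, x.2 + y.2))
    (Ω : Set (A × C → ℂˣ)) (hΩ : IsCoadjointOrbit half ψ Ω)
    (χ : A × C → ℂˣ) (hχ : χ ∈ Ω) (b : A × C) :
    ∃ hb : ∀ x ∈ Vorb Ω,
        (LinearMap.mulRight ℂ (MonoidAlgebra.single b⁻¹ (1 : ℂ))) x ∈ Vorb Ω,
      (coact ψ b χ = χ →
        LinearMap.trace ℂ (Vorb Ω)
            ((LinearMap.mulRight ℂ (MonoidAlgebra.single b⁻¹ (1 : ℂ))).restrict hb) =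
          (Nat.card Ω : ℂ) * (χ b : ℂ)) ∧
      (coact ψ b χ ≠ χ →
        LinearMap.trace ℂ (Vorb Ω)
            ((LinearMap.mulRight ℂ (MonoidAlgebra.single b⁻¹ (1 : ℂ))).restrict hb) =
          0) := by
  classical
  obtain ⟨χ₀, hχ₀, hΩeq⟩ := hΩ
  have hΩmem : ∀ χ' : A × C → ℂˣ, χ' ∈ Ω ↔ ∃ b' : A × C, χ' = coact ψ b' χ₀ := by
    intro χ'
    rw [hΩeq]
    exact Iff.rfl
  -- every element of the orbit is a character
  have hchar : ∀ χ' ∈ Ω, IsChar half ψ χ' := by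
    intro χ' hm
    obtain ⟨b₂, hb₂⟩ := (hΩmem χ').mp hm
    rw [hb₂]
    exact coact_isChar hψ heq hA hhalf hχ₀ b₂
  -- halving in C
  obtain ⟨c', hc'⟩ : ∃ c' : C, c' + c' = b.2 := by
    obtain ⟨m, hm⟩ := hC
    refine ⟨(m + 1) • b.2, ?_⟩
    rw [← add_nsmul]
    have h1 : (m + 1) + (m + 1) = Fintype.card C + 1 := by omega
    rw [h1, add_nsmul, card_nsmul_eq_zero, zero_add, one_nsmul]
  -- Ω is finite
  have hΩfin : Ω.Finite := by
    rw [hΩeq]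
    exact (Set.finite_range (fun b' : A × C => coact ψ b' χ₀)).subset
      (fun χ' ⟨b', hb'⟩ => ⟨b', hb'.symm⟩)
  letI : Fintype ↥Ω := hΩfin.fintype
  -- the permutation of the orbit induced by right translation
  have hσmem : ∀ χ' ∈ Ω, coact ψ ((0 : A), c') χ' ∈ Ω := by
    intro χ' hm
    obtain ⟨b₂, hb₂⟩ := (hΩmem χ').mp hm
    exact (hΩmem _).mpr ⟨((0 : A), c' + b₂.2), by rw [hb₂, coact_coact hψ]⟩
  let σ : ↥Ω → ↥Ω := fun i => ⟨coact ψ ((0 : A), c') i.1, hσmem i.1 i.2⟩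
  -- a basis of V_Ω
  have hli : LinearIndependent ℂ (fun i : ↥Ω => Xelem (i.1 : A × C → ℂˣ)) :=
    xelem_linIndep hψ heq hA hhalf (fun i : ↥Ω => (i.1 : A × C → ℂˣ))
      (fun i => hchar i.1 i.2) Subtype.val_injective
  have hVeq : Vorb Ω =
      Submodule.span ℂ (Set.range (fun i : ↥Ω => Xelem (i.1 : A × C → ℂˣ))) := by
    rw [Vorb, Set.image_eq_range]
  let bs : Module.Basis ↥Ω ℂ ↥(Vorb Ω) :=
    (Module.Basis.span hli).map (LinearEquiv.ofEq _ _ hVeq.symm)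
  have hbs : ∀ i : ↥Ω, ((bs i : MonoidAlgebra ℂ (A × C))) = Xelem (i.1 : A × C → ℂˣ) := by
    intro i
    simp only [bs, Module.Basis.map_apply, LinearEquiv.coe_ofEq_apply, Module.Basis.span_apply]
  -- the translation formula
  have hXmul : ∀ i : ↥Ω,
      Xelem (i.1 : A × C → ℂˣ) * MonoidAlgebra.single b⁻¹ (1 : ℂ) =
        ((i.1 : A × C → ℂˣ) b : ℂ) • Xelem ((σ i).1 : A × C → ℂˣ) := by
    intro i
    exact xelem_mul hψ heq hA hhalf hmul (hchar i.1 i.2) b hc'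
  -- invariance of V_Ω
  have hb : ∀ x ∈ Vorb Ω,
      (LinearMap.mulRight ℂ (MonoidAlgebra.single b⁻¹ (1 : ℂ))) x ∈ Vorb Ω := by
    intro x hx
    induction hx using Submodule.span_induction with
    | mem z hz =>
        obtain ⟨χ', hχ'Ω, rfl⟩ := hz
        rw [LinearMap.mulRight_apply,
          xelem_mul hψ heq hA hhalf hmul (hchar χ' hχ'Ω) b hc']
        exact Submodule.smul_mem _ _
          (Submodule.subset_span ⟨_, hσmem χ' hχ'Ω, rfl⟩)
    | zero => simp
    | add x y _ _ hx hy => rw [map_add]; exact Submodule.add_mem _ hx hy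
    | smul a x _ hx => rw [map_smul]; exact Submodule.smul_mem _ _ hx
  have transfer : ∀ χ' ∈ Ω, ∀ χ'' ∈ Ω, coact ψ b χ' = χ' → coact ψ b χ'' = χ'' := by
      intro χ' hm' χ'' hm'' hfix
      obtain ⟨b₁, hb₁⟩ := (hΩmem χ').mp hm'
      obtain ⟨b₂, hb₂⟩ := (hΩmem χ'').mp hm''
      have hrel := orbit_rel hψ hb₁ hb₂
      calc coact ψ b χ''
          = coact ψ b (coact ψ ((0 : A), b₂.2 - b₁.2) χ') := by rw [← hrel]
        _ = coact ψ ((0 : A), b.2 + (b₂.2 - b₁.2)) χ' := coact_coact hψ _ _ _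
        _ = coact ψ ((0 : A), ((0 : A), b₂.2 - b₁.2).2 + ((0 : A), b.2).2) χ' := by
              rw [add_comm]
        _ = coact ψ ((0 : A), b₂.2 - b₁.2) (coact ψ ((0 : A), b.2) χ') :=
              (coact_coact hψ _ _ _).symm
        _ = coact ψ ((0 : A), b₂.2 - b₁.2) χ' := by rw [← coact_snd b, hfix]
        _ = χ'' := hrel.symm
  have hrest : ∀ i : ↥Ω,
        ((LinearMap.mulRight ℂ (MonoidAlgebra.single b⁻¹ (1 : ℂ))).restrict hb) (bs i) =
          ((i.1 : A × C → ℂˣ) b : ℂ) • bs (σ i) := by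
    intro i
    apply Subtype.ext
    rw [LinearMap.restrict_coe_apply, LinearMap.mulRight_apply, hbs i, hXmul i]
    rw [Submodule.coe_smul, hbs (σ i)]
  have hdiag : ∀ i : ↥Ω,
      Matrix.diag (LinearMap.toMatrix bs bs
        ((LinearMap.mulRight ℂ (MonoidAlgebra.single b⁻¹ (1 : ℂ))).restrict hb)) i =
      ((i.1 : A × C → ℂˣ) b : ℂ) * (if σ i = i then 1 else 0) := by
    intro i
    rw [Matrix.diag, LinearMap.toMatrix_apply, hrest i, map_smul, Finsupp.smul_apply,
      Module.Basis.repr_self, smul_eq_mul]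
    congr 1
    rw [Finsupp.single_apply]
  have htr : LinearMap.trace ℂ ↥(Vorb Ω)
      ((LinearMap.mulRight ℂ (MonoidAlgebra.single b⁻¹ (1 : ℂ))).restrict hb) =
      ∑ i : ↥Ω, ((i.1 : A × C → ℂˣ) b : ℂ) * (if σ i = i then 1 else 0) := by
    rw [LinearMap.trace_eq_matrix_trace ℂ bs, Matrix.trace]
    exact Finset.sum_congr rfl (fun i _ => hdiag i)
  refine ⟨hb, ?_, ?_⟩ <;> intro hfixχ
  -- case: b stabilizes χ
  · rw [htr]
    have hσfix : ∀ i : ↥Ω, σ i = i := by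
      intro i
      exact Subtype.ext (stab_half_c hψ heq hA hhalf (hchar i.1 i.2) hc'
        (transfer χ hχ i.1 i.2 hfixχ))
    have hval : ∀ i : ↥Ω, ((i.1 : A × C → ℂˣ) b : ℂ) = (χ b : ℂ) := by
      intro i
      obtain ⟨b₁, hb₁⟩ := (hΩmem χ).mp hχ
      obtain ⟨b₂, hb₂⟩ := (hΩmem i.1).mp i.2
      have hrel := orbit_rel hψ hb₁ hb₂
      have hv := stab_value hψ heq hA hhalf (hchar χ hχ) hfixχ (b₂.2 - b₁.2)
      rw [hrel]
      exact_mod_cast congrArg Units.val hv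
    rw [Finset.sum_congr rfl (fun i _ => by rw [hσfix i, if_pos rfl, mul_one, hval i])]
    rw [Finset.sum_const, Finset.card_univ, nsmul_eq_mul]
    congr 1
    rw [Nat.card_eq_fintype_card]
  -- case: b does not stabilize χ
  · rw [htr]
    have hσne : ∀ i : ↥Ω, σ i ≠ i := by
      intro i hcon
      apply hfixχ
      refine transfer i.1 i.2 χ hχ ?_
      have hcon' : coact ψ ((0 : A), c') i.1 = i.1 := congrArg Subtype.val hcon
      calc coact ψ b i.1 = coact ψ ((0 : A), b.2) i.1 := coact_snd b i.1
        _ = coact ψ ((0 : A), ((0 : A), c').2 + ((0 : A), c').2) i.1 := by rw [hc']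
        _ = coact ψ ((0 : A), c') (coact ψ ((0 : A), c') i.1) :=
              (coact_coact hψ _ _ _).symm
        _ = i.1 := by rw [hcon', hcon']
    rw [Finset.sum_congr rfl (fun i _ => by rw [if_neg (hσne i), mul_zero])]
    exact Finset.sum_const_zero
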